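/- Let Φ ⊂ ℂ be a finite set with at least two elements, let M be an even positive integer, let Θ be uniform on {2πl/M : l = 0,…,M−1}, and let N be a circularly symmetric complex Gaussian with variance σ² > 0. Suppose, for contradiction, that (F(·|s))_{s∈Φ} is a family of probability measures on ℂ such that for all s, s′ ∈ Φ the law of s + X′e^{iΘ} + N equals the law of s′ + Xe^{iΘ} + N, where X ~ F(·|s), X′ ~ F(·|s′), Θ, N are mutually independent. Then for every pair s ≠ s′ in Φ, writing s = s₁ + is₂ and s′ = s₁′ + is₂′, the characteristic function φ(ω₁,ω₂) = E[exp(i(ω₁ Re(Xe^{iΘ}) + ω₂ Im(Xe^{iΘ})))] of Xe^{iΘ} with X ~ F(·|s) vanishes at every (ω₁,ω₂) ∈ ℝ² with (s₁ − s₁′)ω₁ + (s₂ − s₂′)ω₂ ∉ πℤ. -/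

import Mathlib

open MeasureTheory ProbabilityTheory
open scoped NNReal ENNReal

/-- The law of a circularly symmetric complex Gaussian random variable with variance `v`. -/
noncomputable def gaussComplexLaw (v : ℝ≥0) : Measure ℂ :=
  ((gaussianReal 0 (v / 2)).prod (gaussianReal 0 (v / 2))).map
    (fun p : ℝ × ℝ => (p.1 : ℂ) + p.2 * Complex.I)

/-- The uniform distribution on the phase set `{2πl/M : l = 0, 1, …, M−1}`. -/
noncomputable def phaseLaw (M : ℕ) : Measure ℝ :=
  (M : ℝ≥0∞)⁻¹ • ∑ l ∈ Finset.range M, Measure.dirac (2 * Real.pi * l / M)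

/-- The characteristic function of a complex-valued distribution `ν`, evaluated at
`(ω₁, ω₂) ∈ ℝ²`: `φ_ν(ω₁,ω₂) = E[exp(i(ω₁ Re X + ω₂ Im X))]` for `X ~ ν`. -/
noncomputable def charFunC (ν : Measure ℂ) (w : ℝ × ℝ) : ℂ :=
  ∫ z, Complex.exp (Complex.I * ((w.1 * z.re + w.2 * z.im : ℝ) : ℂ)) ∂ν

namespace SPOFDM

noncomputable def Lw (w : ℝ × ℝ) (z : ℂ) : ℝ := w.1 * z.re + w.2 * z.im

noncomputable def ew (w : ℝ × ℝ) (z : ℂ) : ℂ := Complex.exp (Complex.I * (Lw w z : ℂ))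

lemma charFunC_eq (ν : Measure ℂ) (w : ℝ × ℝ) : charFunC ν w = ∫ z, ew w z ∂ν := rfl

lemma Lw_add (w : ℝ × ℝ) (z z' : ℂ) : Lw w (z + z') = Lw w z + Lw w z' := by
  simp [Lw]; ring

lemma Lw_neg (w : ℝ × ℝ) (z : ℂ) : Lw w (-z) = -Lw w z := by
  simp [Lw]; ring

lemma ew_add (w : ℝ × ℝ) (z z' : ℂ) : ew w (z + z') = ew w z * ew w z' := by
  rw [ew, ew, ew, ← Complex.exp_add, Lw_add]
  push_cast
  ring_nf

lemma norm_ew (w : ℝ × ℝ) (z : ℂ) : ‖ew w z‖ = 1 := by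
  rw [ew, mul_comm, Complex.norm_exp_ofReal_mul_I]

lemma measurable_ew (w : ℝ × ℝ) : Measurable (ew w) := by
  unfold ew Lw
  fun_prop

lemma ew_ne_zero (w : ℝ × ℝ) (z : ℂ) : ew w z ≠ 0 := Complex.exp_ne_zero _

lemma conj_ew (w : ℝ × ℝ) (z : ℂ) : (starRingEnd ℂ) (ew w z) = ew w (-z) := by
  rw [ew, ew, ← Complex.exp_conj, Lw_neg]
  congr 1
  push_cast
  simp [map_mul, Complex.conj_I]

lemma integrable_ew {α : Type*} [MeasurableSpace α] {μ : Measure α} [IsFiniteMeasure μ]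
    {g : α → ℂ} (hg : Measurable g) (w : ℝ × ℝ) :
    Integrable (fun a => ew w (g a)) μ :=
  (integrable_const (1 : ℝ)).mono' ((measurable_ew w).comp hg).aestronglyMeasurable
    (Filter.Eventually.of_forall fun a => by rw [norm_ew])

end SPOFDM
namespace SPOFDM

lemma isProbabilityMeasure_phaseLaw {M : ℕ} (hM : 0 < M) :
    IsProbabilityMeasure (phaseLaw M) := by
  constructor
  rw [phaseLaw]
  simp only [Measure.smul_apply, Measure.coe_finset_sum, Finset.sum_apply,
    Measure.dirac_apply_of_mem (Set.mem_univ _), Finset.sum_const,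
    Finset.card_range, nsmul_eq_mul, mul_one, smul_eq_mul]
  exact ENNReal.inv_mul_cancel (by exact_mod_cast hM.ne') (ENNReal.natCast_ne_top M)

lemma isProbabilityMeasure_gaussComplexLaw (v : ℝ≥0) :
    IsProbabilityMeasure (gaussComplexLaw v) := by
  have m3 : Measurable fun p : ℝ × ℝ => (p.1 : ℂ) + p.2 * Complex.I := by fun_prop
  exact Measure.isProbabilityMeasure_map m3.aemeasurable

lemma channel_charFun (c : ℂ) (μ : Measure ℂ) (P : Measure ℝ) (G : Measure ℂ)
    [IsProbabilityMeasure μ] [IsProbabilityMeasure P] [IsProbabilityMeasure G] (w : ℝ × ℝ) :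
    charFunC (Measure.map (fun q : ℂ × ℝ × ℂ => c + q.1 * Complex.exp (Complex.I * q.2.1) + q.2.2)
        (μ.prod (P.prod G))) w
    = ew w c *
      charFunC (Measure.map (fun q : ℂ × ℝ => q.1 * Complex.exp (Complex.I * q.2)) (μ.prod P)) w *
      charFunC G w := by
  have m2 : Measurable (fun q : ℂ × ℝ => q.1 * Complex.exp (Complex.I * q.2)) := by fun_prop
  have m1 : Measurable
      (fun q : ℂ × ℝ × ℂ => c + q.1 * Complex.exp (Complex.I * q.2.1) + q.2.2) := by fun_prop
  rw [charFunC_eq, charFunC_eq, charFunC_eq,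
    integral_map m1.aemeasurable (measurable_ew w).aestronglyMeasurable,
    integral_map m2.aemeasurable (measurable_ew w).aestronglyMeasurable]
  simp only [ew_add, mul_assoc]
  rw [integral_const_mul]
  congr 1
  have hint : Integrable
      (fun q : ℂ × ℝ × ℂ => ew w (q.1 * Complex.exp (Complex.I * q.2.1)) * ew w q.2.2)
      (μ.prod (P.prod G)) := by
    have heq : (fun q : ℂ × ℝ × ℂ => ew w (q.1 * Complex.exp (Complex.I * q.2.1)) * ew w q.2.2)
        = fun q : ℂ × ℝ × ℂ => ew w (q.1 * Complex.exp (Complex.I * q.2.1) + q.2.2) := by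
      funext q; rw [ew_add]
    rw [heq]
    exact integrable_ew (by fun_prop) w
  have hint2 : Integrable (fun p : ℂ × ℝ => ew w (p.1 * Complex.exp (Complex.I * p.2)))
      (μ.prod P) := integrable_ew m2 w
  rw [MeasureTheory.integral_prod _ hint]
  calc ∫ x, ∫ p : ℝ × ℂ, ew w (x * Complex.exp (Complex.I * p.1)) * ew w p.2 ∂(P.prod G) ∂μ
      = ∫ x, (∫ θ, ew w (x * Complex.exp (Complex.I * θ)) ∂P) * ∫ z, ew w z ∂G ∂μ := by
        refine integral_congr_ae (Filter.Eventually.of_forall fun x => ?_)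
        exact MeasureTheory.integral_prod_mul
          (f := fun θ : ℝ => ew w (x * Complex.exp (Complex.I * θ))) (g := fun z : ℂ => ew w z)
    _ = (∫ x, ∫ θ, ew w (x * Complex.exp (Complex.I * θ)) ∂P ∂μ) * ∫ z, ew w z ∂G := by
        rw [integral_mul_const]
    _ = (∫ p : ℂ × ℝ, ew w (p.1 * Complex.exp (Complex.I * p.2)) ∂(μ.prod P)) * ∫ z, ew w z ∂G :=
        by rw [MeasureTheory.integral_prod _ hint2]

lemma gauss1d_ne {v' : ℝ≥0} (hv : v' ≠ 0) (t : ℝ) :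
    ∫ x : ℝ, Complex.exp (Complex.I * ((t * x : ℝ) : ℂ)) ∂(gaussianReal 0 v') ≠ 0 := by
  rw [gaussianReal_of_var_ne_zero 0 hv]
  have hmeas : Measurable fun x : ℝ => (gaussianPDFReal 0 v' x).toNNReal :=
    (measurable_gaussianPDFReal 0 v').real_toNNReal
  have hpdf : gaussianPDF 0 v' = fun x => ((gaussianPDFReal 0 v' x).toNNReal : ℝ≥0∞) := rfl
  rw [hpdf, integral_withDensity_eq_integral_smul hmeas]
  have hv0 : (0 : ℝ) < (v' : ℝ) := by
    exact_mod_cast pos_iff_ne_zero.mpr hv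
  have key : ∀ x : ℝ, (gaussianPDFReal 0 v' x).toNNReal •
        Complex.exp (Complex.I * ((t * x : ℝ) : ℂ))
      = ((Real.sqrt (2 * Real.pi * v'))⁻¹ : ℂ) *
        Complex.exp ((((-(2 * (v' : ℝ))⁻¹ : ℝ)) : ℂ) * x ^ 2 + (Complex.I * t) * x + 0) := by
    intro x
    rw [NNReal.smul_def, Real.coe_toNNReal _ (gaussianPDFReal_nonneg 0 v' x),
      gaussianPDFReal, Complex.real_smul]
    push_cast
    rw [mul_assoc, ← Complex.exp_add]
    congr 1
    push_cast
    field_simp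
    ring
  simp_rw [key]
  rw [integral_const_mul]
  have hb : ((((-(2 * (v' : ℝ))⁻¹ : ℝ)) : ℂ)).re < 0 := by
    rw [Complex.ofReal_re]
    simp only [neg_lt, neg_zero, neg_neg]
    positivity
  rw [integral_cexp_quadratic hb]
  have hbne : ((((-(2 * (v' : ℝ))⁻¹ : ℝ)) : ℂ)) ≠ 0 :=
    Complex.ofReal_ne_zero.mpr (neg_ne_zero.mpr (inv_ne_zero (by positivity)))
  refine mul_ne_zero ?_ (mul_ne_zero ?_ (Complex.exp_ne_zero _))
  · exact inv_ne_zero (Complex.ofReal_ne_zero.mpr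
      (ne_of_gt (Real.sqrt_pos.mpr (by positivity))))
  · have hbase : ((Real.pi : ℂ) / -(((-(2 * (v' : ℝ))⁻¹ : ℝ)) : ℂ)) ≠ 0 :=
      div_ne_zero (Complex.ofReal_ne_zero.mpr Real.pi_ne_zero) (neg_ne_zero.mpr hbne)
    rw [Complex.cpow_def_of_ne_zero hbase]
    exact Complex.exp_ne_zero _

lemma gauss_charFun_ne {v : ℝ≥0} (hv : 0 < v) (w : ℝ × ℝ) :
    charFunC (gaussComplexLaw v) w ≠ 0 := by
  have m3 : Measurable fun p : ℝ × ℝ => (p.1 : ℂ) + p.2 * Complex.I := by fun_prop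
  rw [charFunC_eq, gaussComplexLaw,
    integral_map m3.aemeasurable (measurable_ew w).aestronglyMeasurable]
  have key : ∀ p : ℝ × ℝ, ew w ((p.1 : ℂ) + p.2 * Complex.I)
      = Complex.exp (Complex.I * ((w.1 * p.1 : ℝ) : ℂ)) *
        Complex.exp (Complex.I * ((w.2 * p.2 : ℝ) : ℂ)) := by
    intro p
    rw [ew, ← Complex.exp_add]
    congr 1
    simp [Lw]
    push_cast
    ring
  simp_rw [key]
  rw [MeasureTheory.integral_prod_mul (f := fun a : ℝ => Complex.exp (Complex.I * ((w.1 * a : ℝ) : ℂ)))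
    (g := fun a : ℝ => Complex.exp (Complex.I * ((w.2 * a : ℝ) : ℂ)))]
  have hv2 : (v / 2 : ℝ≥0) ≠ 0 := div_ne_zero hv.ne' two_ne_zero
  exact mul_ne_zero (gauss1d_ne hv2 w.1) (gauss1d_ne hv2 w.2)

lemma integral_phaseLaw (M : ℕ) (f : ℝ → ℂ) :
    ∫ θ, f θ ∂(phaseLaw M)
      = ((M : ℝ))⁻¹ • ∑ l ∈ Finset.range M, f (2 * Real.pi * l / M) := by
  have hf : ∀ i ∈ Finset.range M, Integrable f (Measure.dirac (2 * Real.pi * i / (M : ℝ))) :=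
    fun i _ => (integrable_const (f (2 * Real.pi * i / (M : ℝ)))).congr
      (MeasureTheory.ae_eq_dirac f).symm
  rw [phaseLaw, integral_smul_measure, integral_finset_sum_measure hf]
  simp_rw [integral_dirac]
  congr 1
  simp [ENNReal.toReal_inv]

lemma sum_shift {h : ℕ → ℂ} {M : ℕ} (hper : ∀ l, h (l + M) = h l) (k : ℕ) :
    ∑ l ∈ Finset.range M, h (l + k) = ∑ l ∈ Finset.range M, h l := by
  induction k with
  | zero => simp
  | succ k ih =>
    have step : ∀ H : ℕ → ℂ, (∀ l, H (l + M) = H l) →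
        ∑ l ∈ Finset.range M, H (l + 1) = ∑ l ∈ Finset.range M, H l := by
      intro H hH
      have h1 : ∑ l ∈ Finset.range (M + 1), H l
          = (∑ l ∈ Finset.range M, H (l + 1)) + H 0 := Finset.sum_range_succ' H M
      have h2 : ∑ l ∈ Finset.range (M + 1), H l
          = (∑ l ∈ Finset.range M, H l) + H M := Finset.sum_range_succ H M
      have h3 : H M = H 0 := by simpa using hH 0
      have := h1.symm.trans h2
      rw [h3] at this
      exact add_right_cancel this
    calc ∑ l ∈ Finset.range M, h (l + (k + 1))
        = ∑ l ∈ Finset.range M, h ((l + 1) + k) := by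
          refine Finset.sum_congr rfl fun l _ => ?_
          congr 1
          omega
      _ = ∑ l ∈ Finset.range M, h (l + k) := by
          refine step (fun n => h (n + k)) fun l => ?_
          show h (l + M + k) = h (l + k)
          have hidx : l + M + k = l + k + M := by omega
          rw [hidx, hper]
      _ = ∑ l ∈ Finset.range M, h l := ih

set_option maxHeartbeats 1000000 in
lemma charFun_phase_im (μ : Measure ℂ) [IsProbabilityMeasure μ] {M : ℕ} (hM : 0 < M)
    (hMe : Even M) (w : ℝ × ℝ) :
    (charFunC (Measure.map (fun q : ℂ × ℝ => q.1 * Complex.exp (Complex.I * q.2))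
      (μ.prod (phaseLaw M))) w).im = 0 := by
  haveI := isProbabilityMeasure_phaseLaw hM
  have m2 : Measurable (fun q : ℂ × ℝ => q.1 * Complex.exp (Complex.I * q.2)) := by fun_prop
  rw [← Complex.conj_eq_iff_im]
  rw [charFunC_eq, integral_map m2.aemeasurable (measurable_ew w).aestronglyMeasurable,
    ← integral_conj]
  have point : ∀ (x : ℂ) (θ : ℝ),
      (starRingEnd ℂ) (ew w (x * Complex.exp (Complex.I * θ)))
        = ew w (x * Complex.exp (Complex.I * ((θ + Real.pi : ℝ) : ℂ))) := by
    intro x θ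
    rw [conj_ew]
    congr 1
    have : ((θ + Real.pi : ℝ) : ℂ) = (θ : ℂ) + (Real.pi : ℂ) := by push_cast; ring
    rw [this, mul_add, Complex.exp_add,
      show Complex.I * (Real.pi : ℂ) = (Real.pi : ℂ) * Complex.I from by ring,
      Complex.exp_pi_mul_I]
    ring
  simp_rw [point]
  have hint1 : Integrable
      (fun q : ℂ × ℝ => ew w (q.1 * Complex.exp (Complex.I * ((q.2 + Real.pi : ℝ) : ℂ))))
      (μ.prod (phaseLaw M)) := integrable_ew (by fun_prop) w
  have hint2 : Integrable (fun q : ℂ × ℝ => ew w (q.1 * Complex.exp (Complex.I * q.2)))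
      (μ.prod (phaseLaw M)) := integrable_ew m2 w
  rw [MeasureTheory.integral_prod _ hint1, MeasureTheory.integral_prod _ hint2]
  refine integral_congr_ae (Filter.Eventually.of_forall fun x => ?_)
  dsimp only
  rw [integral_phaseLaw, integral_phaseLaw]
  refine congrArg (fun S : ℂ => ((M : ℝ))⁻¹ • S) ?_
  obtain ⟨m, hm⟩ := hMe
  have hMne : (M : ℝ) ≠ 0 := Nat.cast_ne_zero.mpr hM.ne'
  set h : ℕ → ℂ :=
    fun l => ew w (x * Complex.exp (Complex.I * ((2 * Real.pi * l / M : ℝ) : ℂ))) with hh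
  have hper : ∀ l, h (l + M) = h l := by
    intro l
    simp only [hh]
    congr 2
    have harg : (2 * Real.pi * (l + M : ℕ) / M : ℝ)
        = (2 * Real.pi * l / M : ℝ) + 2 * Real.pi := by
      push_cast
      field_simp
    rw [harg]
    push_cast
    rw [mul_add, Complex.exp_add,
      show Complex.I * (2 * (Real.pi : ℂ)) = 2 * (Real.pi : ℂ) * Complex.I from by ring,
      Complex.exp_two_pi_mul_I, mul_one]
  calc ∑ l ∈ Finset.range M,
        ew w (x * Complex.exp (Complex.I * ((2 * Real.pi * l / M + Real.pi : ℝ) : ℂ)))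
      = ∑ l ∈ Finset.range M, h (l + m) := by
        refine Finset.sum_congr rfl fun l _ => ?_
        simp only [hh]
        have hmne : (m : ℝ) ≠ 0 := by
          intro h0
          apply hMne
          rw [hm]; push_cast; rw [h0]; ring
        have harg : (2 * Real.pi * l / M + Real.pi : ℝ)
            = (2 * Real.pi * ((l + m : ℕ) : ℝ) / M : ℝ) := by
          rw [hm]; push_cast; field_simp; ring
        rw [harg]
    _ = ∑ l ∈ Finset.range M, h l := sum_shift hper m

end SPOFDM

open SPOFDM in
/-- If a family `F (·|s)` of probability measures symmetrized the SP-OFDM channel, i.e.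
for all `s, s' ∈ Φ` the law of `s + X'e^{iΘ} + N` (with `X' ~ F(·|s')`, `Θ` uniform `M`-PSK,
`N` circularly symmetric complex Gaussian, mutually independent) equals the law of
`s' + Xe^{iΘ} + N` (with `X ~ F(·|s)`), then for every `s ≠ s'` in `Φ` the characteristic
function of `Xe^{iΘ}` with `X ~ F(·|s)` vanishes at every `(ω₁,ω₂)` with
`(s₁−s₁′)ω₁ + (s₂−s₂′)ω₂ ∉ πℤ`. -/
theorem symmetrizing_kernel_charFun_vanishes_off_lines
    (Φ : Finset ℂ) (hΦ : 2 ≤ Φ.card)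
    (M : ℕ) (hM : 0 < M) (hMeven : Even M) (v : ℝ≥0) (hv : 0 < v)
    (F : ℂ → Measure ℂ) (hF : ∀ s ∈ Φ, IsProbabilityMeasure (F s))
    (hsym : ∀ s ∈ Φ, ∀ s' ∈ Φ,
      Measure.map (fun q : ℂ × ℝ × ℂ => s + q.1 * Complex.exp (Complex.I * q.2.1) + q.2.2)
        ((F s').prod ((phaseLaw M).prod (gaussComplexLaw v))) =
      Measure.map (fun q : ℂ × ℝ × ℂ => s' + q.1 * Complex.exp (Complex.I * q.2.1) + q.2.2)
        ((F s).prod ((phaseLaw M).prod (gaussComplexLaw v)))) :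
    ∀ s ∈ Φ, ∀ s' ∈ Φ, s ≠ s' →
      ∀ w : ℝ × ℝ,
        (∀ n : ℤ, (s.re - s'.re) * w.1 + (s.im - s'.im) * w.2 ≠ n * Real.pi) →
        charFunC
          (Measure.map (fun q : ℂ × ℝ => q.1 * Complex.exp (Complex.I * q.2))
            ((F s).prod (phaseLaw M))) w = 0 := by
  intro s hs s' hs' hne w hw
  haveI := hF s hs
  haveI := hF s' hs'
  haveI := isProbabilityMeasure_phaseLaw hM
  haveI := isProbabilityMeasure_gaussComplexLaw v
  set A : ℂ := charFunC (Measure.map (fun q : ℂ × ℝ => q.1 * Complex.exp (Complex.I * q.2))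
      ((F s).prod (phaseLaw M))) w with hA
  set A' : ℂ := charFunC (Measure.map (fun q : ℂ × ℝ => q.1 * Complex.exp (Complex.I * q.2))
      ((F s').prod (phaseLaw M))) w with hA'
  have h1 := congrArg (fun ν => charFunC ν w) (hsym s hs s' hs')
  simp only [channel_charFun] at h1
  -- h1 : ew w s * A' * charFunC (gaussComplexLaw v) w = ew w s' * A * charFunC ... w
  have h2 : ew w s * A' = ew w s' * A :=
    mul_right_cancel₀ (gauss_charFun_ne hv w) h1
  have hsplit : ew w s = ew w (s - s') * ew w s' := by
    rw [← ew_add]; congr 1; ring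
  have h3 : A = ew w (s - s') * A' := by
    have := h2
    rw [hsplit] at this
    have h4 : ew w s' * (ew w (s - s') * A') = ew w s' * A := by
      rw [← this]; ring
    exact (mul_left_cancel₀ (ew_ne_zero w s') h4).symm
  have hAim : A.im = 0 := charFun_phase_im (F s) hM hMeven w
  have hA'im : A'.im = 0 := charFun_phase_im (F s') hM hMeven w
  set α : ℝ := Lw w (s - s') with hα
  have hewα : ew w (s - s') = Complex.exp ((α : ℂ) * Complex.I) := by
    rw [ew, mul_comm]
  have hαval : α = (s.re - s'.re) * w.1 + (s.im - s'.im) * w.2 := by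
    rw [hα, Lw]
    simp only [Complex.sub_re, Complex.sub_im]
    ring
  have hsin : Real.sin α ≠ 0 := by
    intro h0
    obtain ⟨n, hn⟩ := Real.sin_eq_zero_iff.mp h0
    exact hw n (by rw [← hαval]; exact hn.symm)
  have him : (ew w (s - s')).im = Real.sin α := by
    rw [hewα, Complex.exp_ofReal_mul_I_im]
  have hre : A'.re = 0 := by
    have : A.im = (ew w (s - s')).re * A'.im + (ew w (s - s')).im * A'.re := by
      rw [h3, Complex.mul_im]
    rw [hAim, hA'im, him, mul_zero, zero_add] at this
    exact (mul_eq_zero.mp this.symm).resolve_left hsin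
  have hA'0 : A' = 0 := Complex.ext hre hA'im
  rw [h3, hA'0, mul_zero]
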